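/- arXiv:2508.11033 — 2 statements merged into one kernel-verified Lean document; each statement's English description precedes it below -/
import Mathlib

section
/- (Theorem 1, sign of the bias in the estimated rate of algorithmic progress.) Assume Cov(ln D, Y) > 0, β > 0, β_year > 0, Cov(Y, ε) = 0, Var(Y) > 0, the Gram determinant Var(ln D)·Var(Y) − Cov(ln D, Y)² is positive, and Cov(ln D, ε) > −Var(ln D − (Cov(ln D, Y)/Var(Y))·Y). Let (b, b_year) satisfy the population normal equations Cov(ln D, ln L) = −b·Var(ln D) − b_year·Cov(ln D, Y) and Cov(Y − Y₀, ln L) = −b·Cov(ln D, Y) − b_year·Var(Y) for ln L generated by the DGP ln L = ln B − β·ln D − β_year·(Y − Y₀) − β·ε. Then the sign of the large-sample bias b_year/b − β_year/β equals minus the sign of Cov(ln D, ε): the bias is negative if Cov(ln D, ε) > 0, zero if Cov(ln D, ε) = 0, and positive if Cov(ln D, ε) < 0. -/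
open MeasureTheory ProbabilityTheory

set_option linter.unusedSectionVars false

/-- Covariance of two real-valued random variables with respect to a measure `μ`. -/
noncomputable def cov {Ω : Type*} [MeasurableSpace Ω] (μ : Measure Ω) (X Y : Ω → ℝ) : ℝ :=
  ∫ ω, (X ω - ∫ x, X x ∂μ) * (Y ω - ∫ x, Y x ∂μ) ∂μ

section aux

variable {Ω : Type*} [MeasurableSpace Ω] {μ : Measure Ω} [IsProbabilityMeasure μ]

lemma mul_int_aux {f g : Ω → ℝ} (hf : MemLp f 2 μ) (hg : MemLp g 2 μ) :
    Integrable (fun ω => f ω * g ω) μ := by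
  have h := (hf.integrable_sq.add hg.integrable_sq).div_const 2
  refine h.mono' (hf.aestronglyMeasurable.mul hg.aestronglyMeasurable) ?_
  filter_upwards with ω
  have h0 : ‖f ω * g ω‖ = |f ω| * |g ω| := by rw [norm_mul]; rfl
  rw [h0]
  have h1 : |f ω| ^ 2 = f ω ^ 2 := sq_abs _
  have h2 : |g ω| ^ 2 = g ω ^ 2 := sq_abs _
  simp only [Pi.add_apply]
  nlinarith [sq_nonneg (|f ω| - |g ω|), abs_nonneg (f ω), abs_nonneg (g ω)]

lemma centered_memLp {f : Ω → ℝ} (hf : MemLp f 2 μ) :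
    MemLp (fun ω => f ω - ∫ x, f x ∂μ) 2 μ :=
  hf.sub (memLp_const _)

lemma cov_mul_int {f g : Ω → ℝ} (hf : MemLp f 2 μ) (hg : MemLp g 2 μ) :
    Integrable (fun ω => (f ω - ∫ x, f x ∂μ) * (g ω - ∫ x, g x ∂μ)) μ :=
  mul_int_aux (centered_memLp hf) (centered_memLp hg)

lemma cov_comm (f g : Ω → ℝ) : cov μ f g = cov μ g f := by
  unfold cov; simp_rw [mul_comm]

lemma variance_eq_cov {f : Ω → ℝ} (hf : MemLp f 2 μ) : variance f μ = cov μ f f := by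
  rw [variance_eq_integral hf.aestronglyMeasurable.aemeasurable]
  unfold cov
  congr 1
  ext ω
  simp [sq]

/-- bilinearity in the second argument for a 3-term affine combination -/
lemma cov_lin3 {f g h k : Ω → ℝ} (hf : MemLp f 2 μ) (hg : MemLp g 2 μ)
    (hh : MemLp h 2 μ) (hk : MemLp k 2 μ) (c a b d : ℝ) :
    cov μ f (fun ω => c + a * g ω + b * h ω + d * k ω)
      = a * cov μ f g + b * cov μ f h + d * cov μ f k := by
  have hgi := hg.integrable (by norm_num)
  have hhi := hh.integrable (by norm_num)
  have hki := hk.integrable (by norm_num)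
  have hmean : (∫ ω, (c + a * g ω + b * h ω + d * k ω) ∂μ)
      = c + a * ∫ x, g x ∂μ + b * ∫ x, h x ∂μ + d * ∫ x, k x ∂μ := by
    rw [integral_add, integral_add, integral_add, integral_const_mul, integral_const_mul,
      integral_const_mul, integral_const]
    · simp
    all_goals
      first
      | exact integrable_const _
      | exact hgi.const_mul _
      | exact hhi.const_mul _
      | exact hki.const_mul _
      | exact ((integrable_const c).add (hgi.const_mul a))
      | exact (((integrable_const c).add (hgi.const_mul a)).add (hhi.const_mul b))
  unfold cov
  rw [hmean]
  have heq : ∀ ω, (f ω - ∫ x, f x ∂μ) *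
      ((c + a * g ω + b * h ω + d * k ω)
        - (c + a * ∫ x, g x ∂μ + b * ∫ x, h x ∂μ + d * ∫ x, k x ∂μ))
      = a * ((f ω - ∫ x, f x ∂μ) * (g ω - ∫ x, g x ∂μ))
        + b * ((f ω - ∫ x, f x ∂μ) * (h ω - ∫ x, h x ∂μ))
        + d * ((f ω - ∫ x, f x ∂μ) * (k ω - ∫ x, k x ∂μ)) := by
    intro ω; ring
  simp_rw [heq]
  rw [integral_add, integral_add, integral_const_mul, integral_const_mul, integral_const_mul]
  · exact ((cov_mul_int hf hg).const_mul a)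
  · exact ((cov_mul_int hf hh).const_mul b)
  · exact ((cov_mul_int hf hg).const_mul a).add ((cov_mul_int hf hh).const_mul b)
  · exact ((cov_mul_int hf hk).const_mul d)

end aux

/-- Theorem 1: the sign of the large-sample bias `b_year/b − β_year/β` is minus the
sign of the selection covariance `Cov(ln D, ε)`. -/
theorem bias_sign {Ω : Type*} [MeasurableSpace Ω] (μ : Measure Ω) [IsProbabilityMeasure μ]
    (X Y ε : Ω → ℝ) (hX : MemLp X 2 μ) (hY : MemLp Y 2 μ) (hε : MemLp ε 2 μ)
    (β β_year lnB Y₀ : ℝ) (lnL : Ω → ℝ)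
    (hlnL : ∀ ω, lnL ω = lnB - β * X ω - β_year * (Y ω - Y₀) - β * ε ω)
    (hXY : 0 < cov μ X Y) (hβ : 0 < β) (hβyear : 0 < β_year) (hYε : cov μ Y ε = 0)
    (hVarY : 0 < variance Y μ)
    (hGram : 0 < variance X μ * variance Y μ - (cov μ X Y) ^ 2)
    (hsel : cov μ X ε > -variance (fun ω => X ω - (cov μ X Y / variance Y μ) * Y ω) μ)
    (b b_year : ℝ)
    (h1 : cov μ X lnL = -b * variance X μ - b_year * cov μ X Y)
    (h2 : cov μ (fun ω => Y ω - Y₀) lnL = -b * cov μ X Y - b_year * variance Y μ) :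
    (0 < cov μ X ε → b_year / b - β_year / β < 0) ∧
    (cov μ X ε = 0 → b_year / b - β_year / β = 0) ∧
    (cov μ X ε < 0 → 0 < b_year / b - β_year / β) := by
  -- rewrite lnL as an affine combination
  have hlnL' : lnL = fun ω => (lnB + β_year * Y₀) + (-β) * X ω + (-β_year) * Y ω
      + (-β) * ε ω := by
    ext ω; rw [hlnL ω]; ring
  -- covariance computations
  have hcovX : cov μ X lnL
      = -β * variance X μ - β_year * cov μ X Y - β * cov μ X ε := by
    rw [hlnL', cov_lin3 hX hX hY hε, ← variance_eq_cov hX]; ring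
  have hYc : MemLp (fun ω => Y ω - Y₀) 2 μ := hY.sub (memLp_const _)
  have hYform : (fun ω => Y ω - Y₀) = fun ω => (-Y₀) + (1:ℝ) * Y ω + 0 * Y ω + 0 * Y ω := by
    ext ω; ring
  have hYc' : MemLp (fun ω => (-Y₀) + (1:ℝ) * Y ω + 0 * Y ω + 0 * Y ω) 2 μ := hYform ▸ hYc
  have hcovY : cov μ (fun ω => Y ω - Y₀) lnL
      = -β * cov μ X Y - β_year * variance Y μ := by
    have e1 : cov μ (fun ω => Y ω - Y₀) X = cov μ X Y := by
      rw [cov_comm, hYform, cov_lin3 hX hY hY hY]; ring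
    have e2 : cov μ (fun ω => Y ω - Y₀) Y = variance Y μ := by
      rw [cov_comm, hYform, cov_lin3 hY hY hY hY, ← variance_eq_cov hY]; ring
    have e3 : cov μ (fun ω => Y ω - Y₀) ε = 0 := by
      rw [cov_comm, hYform, cov_lin3 hε hY hY hY, cov_comm ε Y, hYε]; ring
    rw [hlnL', cov_lin3 hYc hX hY hε, e1, e2, e3]; ring
  -- variance of the residual
  have hres : variance (fun ω => X ω - (cov μ X Y / variance Y μ) * Y ω) μ
      = variance X μ - (cov μ X Y) ^ 2 / variance Y μ := by
    set k := cov μ X Y / variance Y μ with hk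
    have hZ : MemLp (fun ω => X ω - k * Y ω) 2 μ := hX.sub (hY.const_mul _)
    have hform : (fun ω => X ω - k * Y ω)
        = fun ω => 0 + (1:ℝ) * X ω + (-k) * Y ω + 0 * Y ω := by
      ext ω; ring
    have hZ' : MemLp (fun ω => 0 + (1:ℝ) * X ω + (-k) * Y ω + 0 * Y ω) 2 μ := hform ▸ hZ
    rw [variance_eq_cov hZ, hform, cov_lin3 hZ' hX hY hY,
      cov_comm _ X, cov_comm _ Y, cov_lin3 hX hX hY hY, cov_lin3 hY hX hY hY,
      ← variance_eq_cov hX, ← variance_eq_cov hY, cov_comm Y X, hk]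
    field_simp
    ring
  -- abbreviations
  set VX := variance X μ with hVX
  set VY := variance Y μ with hVY
  set C := cov μ X Y with hC
  set S := cov μ X ε with hS
  rw [hres] at hsel
  clear_value VX VY C S
  clear hres hlnL hlnL' hX hY hε hYc hYc' hYform hYε
  -- solve the normal equations
  have hb2 : (b - β) * C + (b_year - β_year) * VY = 0 := by
    rw [hcovY] at h2; linarith
  have hb1 : (b - β) * VX + (b_year - β_year) * C = β * S := by
    rw [hcovX] at h1; linarith
  set G := VX * VY - C ^ 2 with hG
  have hΔ : (b - β) * G = β * S * VY := by
    rw [hG]; linear_combination VY * hb1 - C * hb2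
  have hΔy : (b_year - β_year) * G = -(β * S * C) := by
    rw [hG]; linear_combination VX * hb2 - C * hb1
  have hGpos : 0 < G := hGram
  -- b is positive
  have hselG : -G < S * VY := by
    have h := mul_lt_mul_of_pos_right hsel hVarY
    have hne : VY ≠ 0 := ne_of_gt hVarY
    calc -G = -(VX - C ^ 2 / VY) * VY := by rw [hG]; field_simp
    _ < S * VY := h
  have hbG : b * G = β * (G + S * VY) := by linear_combination hΔ
  have hbpos : 0 < b := by
    have hpos : 0 < β * (G + S * VY) := mul_pos hβ (by linarith)
    nlinarith [hbG, hGpos, hpos]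
  -- the bias numerator
  have hkey : (β * b_year - β_year * b) * G = -(S * (β * C + β_year * VY)) * β := by
    linear_combination β * hΔy - β_year * hΔ
  have hbias : b_year / b - β_year / β = (β * b_year - β_year * b) / (b * β) := by
    field_simp [ne_of_gt hbpos, ne_of_gt hβ]
  have hfac : 0 < β * C + β_year * VY :=
    add_pos (mul_pos hβ hXY) (mul_pos hβyear hVarY)
  have hbβ : 0 < b * β := mul_pos hbpos hβ
  refine ⟨fun h => ?_, fun h => ?_, fun h => ?_⟩
  · rw [hbias]
    apply div_neg_of_neg_of_pos _ hbβ
    nlinarith [hkey, hGpos, mul_pos (mul_pos h hfac) hβ]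
  · rw [hbias]
    have hN : β * b_year - β_year * b = 0 := by
      have : (β * b_year - β_year * b) * G = 0 := by rw [hkey, h]; ring
      exact (mul_eq_zero.mp this).resolve_right (ne_of_gt hGpos)
    rw [hN, zero_div]
  · rw [hbias]
    apply div_pos _ hbβ
    nlinarith [hkey, hGpos, mul_pos (mul_pos (neg_pos.mpr h) hfac) hβ]
end

section
/- Assume β > 0, Cov(ln D, Y) > 0, Cov(Y, ε) = 0, the Gram determinant Var(ln D)·Var(Y) − Cov(ln D, Y)² is positive, and (b, b_year) satisfies the population normal equations Cov(ln D, ln L) = −b·Var(ln D) − b_year·Cov(ln D, Y) and Cov(Y − Y₀, ln L) = −b·Cov(ln D, Y) − b_year·Var(Y) for ln L generated by the DGP ln L = ln B − β·ln D − β_year·(Y − Y₀) − β·ε. Then the sign of b_year − β_year equals minus the sign of Cov(ln D, ε): the OLS probability limit of the calendar-time coefficient is biased downward when Cov(ln D, ε) > 0, unbiased when Cov(ln D, ε) = 0, and biased upward when Cov(ln D, ε) < 0. -/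
open MeasureTheory ProbabilityTheory

private lemma memL2_mul_integrable {Ω : Type*} [MeasurableSpace Ω] {μ : Measure Ω}
    {f g : Ω → ℝ} (hf : MemLp f 2 μ) (hg : MemLp g 2 μ) :
    Integrable (fun ω => f ω * g ω) μ := by
  have : MemLp (f • g) 1 μ := hg.smul hf
  exact memLp_one_iff_integrable.mp this

private lemma cov_lin {Ω : Type*} [MeasurableSpace Ω] (μ : Measure Ω) [IsProbabilityMeasure μ]
    (W X Y ε : Ω → ℝ) (hW : MemLp W 2 μ) (hX : MemLp X 2 μ) (hY : MemLp Y 2 μ)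
    (hε : MemLp ε 2 μ) (a c d e : ℝ) :
    cov μ W (fun ω => a - c * X ω - d * Y ω - e * ε ω)
      = -c * cov μ W X - d * cov μ W Y - e * cov μ W ε := by
  have iX : Integrable X μ := hX.integrable one_le_two
  have iY : Integrable Y μ := hY.integrable one_le_two
  have iε : Integrable ε μ := hε.integrable one_le_two
  set mW := ∫ x, W x ∂μ
  set mX := ∫ x, X x ∂μ
  set mY := ∫ x, Y x ∂μ
  set mε := ∫ x, ε x ∂μ
  have hWc : MemLp (fun ω => W ω - mW) 2 μ := hW.sub (memLp_const mW)
  have hXc : MemLp (fun ω => X ω - mX) 2 μ := hX.sub (memLp_const mX)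
  have hYc : MemLp (fun ω => Y ω - mY) 2 μ := hY.sub (memLp_const mY)
  have hεc : MemLp (fun ω => ε ω - mε) 2 μ := hε.sub (memLp_const mε)
  have iWX := memL2_mul_integrable hWc hXc
  have iWY := memL2_mul_integrable hWc hYc
  have iWε := memL2_mul_integrable hWc hεc
  have iX' : Integrable (fun ω => c * X ω) μ := iX.const_mul c
  have iY' : Integrable (fun ω => d * Y ω) μ := iY.const_mul d
  have iε' : Integrable (fun ω => e * ε ω) μ := iε.const_mul e
  have iZ1 : Integrable (fun ω => a - c * X ω) μ := (integrable_const a).sub iX'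
  have iZ2 : Integrable (fun ω => a - c * X ω - d * Y ω) μ := iZ1.sub iY'
  have hmZ : (∫ ω, (a - c * X ω - d * Y ω - e * ε ω) ∂μ) = a - c * mX - d * mY - e * mε := by
    rw [integral_sub iZ2 iε', integral_sub iZ1 iY', integral_sub (integrable_const a) iX',
      integral_const, integral_const_mul, integral_const_mul, integral_const_mul]
    simp [mX, mY, mε]
  unfold cov
  rw [hmZ]
  have key : ∀ ω, (W ω - mW) * ((a - c * X ω - d * Y ω - e * ε ω) - (a - c * mX - d * mY - e * mε))
      = -c * ((W ω - mW) * (X ω - mX)) - d * ((W ω - mW) * (Y ω - mY))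
        - e * ((W ω - mW) * (ε ω - mε)) := by
    intro ω; ring
  change ∫ ω, (W ω - mW) * ((a - c * X ω - d * Y ω - e * ε ω) - (a - c * mX - d * mY - e * mε)) ∂μ
    = -c * (∫ ω, (W ω - mW) * (X ω - mX) ∂μ) - d * (∫ ω, (W ω - mW) * (Y ω - mY) ∂μ)
      - e * (∫ ω, (W ω - mW) * (ε ω - mε) ∂μ)
  simp_rw [key]
  have j1 : Integrable (fun ω => -c * ((W ω - mW) * (X ω - mX))) μ := iWX.const_mul (-c)
  have j2 : Integrable (fun ω => d * ((W ω - mW) * (Y ω - mY))) μ := iWY.const_mul d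
  have j3 : Integrable (fun ω => e * ((W ω - mW) * (ε ω - mε))) μ := iWε.const_mul e
  have j12 : Integrable (fun ω => -c * ((W ω - mW) * (X ω - mX))
      - d * ((W ω - mW) * (Y ω - mY))) μ := j1.sub j2
  rw [integral_sub j12 j3, integral_sub j1 j2,
    integral_const_mul, integral_const_mul, integral_const_mul]

private lemma cov_shift_left {Ω : Type*} [MeasurableSpace Ω] (μ : Measure Ω)
    [IsProbabilityMeasure μ] (Y Z : Ω → ℝ) (hY : MemLp Y 2 μ) (c : ℝ) :
    cov μ (fun ω => Y ω - c) Z = cov μ Y Z := by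
  have iY : Integrable Y μ := hY.integrable one_le_two
  unfold cov
  have : (∫ x, (Y x - c) ∂μ) = (∫ x, Y x ∂μ) - c := by
    rw [integral_sub iY (integrable_const c), integral_const]; simp
  rw [this]
  congr 1 with ω
  ring_nf

private lemma cov_self {Ω : Type*} [MeasurableSpace Ω] (μ : Measure Ω)
    [IsProbabilityMeasure μ] (X : Ω → ℝ) (hX : MemLp X 2 μ) :
    cov μ X X = variance X μ := by
  rw [variance_eq_integral hX.aemeasurable]
  unfold cov
  congr 1 with ω
  simp [sq]

/-- The sign of the bias in the OLS probability limit of the calendar-time coefficient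
is minus the sign of the selection covariance `Cov(ln D, ε)`. -/
theorem beta_year_hat_bias_sign {Ω : Type*} [MeasurableSpace Ω] (μ : Measure Ω) [IsProbabilityMeasure μ]
    (X Y ε : Ω → ℝ) (hX : MemLp X 2 μ) (hY : MemLp Y 2 μ) (hε : MemLp ε 2 μ)
    (β β_year lnB Y₀ : ℝ) (lnL : Ω → ℝ)
    (hlnL : ∀ ω, lnL ω = lnB - β * X ω - β_year * (Y ω - Y₀) - β * ε ω)
    (hβ : 0 < β) (hXY : 0 < cov μ X Y) (hYε : cov μ Y ε = 0)
    (hGram : 0 < variance X μ * variance Y μ - (cov μ X Y) ^ 2)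
    (b b_year : ℝ)
    (h1 : cov μ X lnL = -b * variance X μ - b_year * cov μ X Y)
    (h2 : cov μ (fun ω => Y ω - Y₀) lnL = -b * cov μ X Y - b_year * variance Y μ) :
    (0 < cov μ X ε → b_year - β_year < 0) ∧
    (cov μ X ε = 0 → b_year - β_year = 0) ∧
    (cov μ X ε < 0 → 0 < b_year - β_year) := by
  have hlnL' : lnL = fun ω => (lnB + β_year * Y₀) - β * X ω - β_year * Y ω - β * ε ω := by
    funext ω; rw [hlnL ω]; ring
  rw [hlnL'] at h1 h2
  rw [cov_lin μ X X Y ε hX hX hY hε, cov_self μ X hX] at h1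
  rw [cov_shift_left μ Y _ hY Y₀, cov_lin μ Y X Y ε hY hX hY hε, cov_self μ Y hY] at h2
  set A := variance X μ
  set V := variance Y μ
  set C := cov μ X Y
  set S := cov μ X ε
  have hCX : cov μ Y X = C := by
    unfold C cov; congr 1 with ω; ring
  rw [hCX, hYε] at h2
  have E1 : (b - β) * A + (b_year - β_year) * C = β * S := by linarith
  have E2 : (b - β) * C + (b_year - β_year) * V = 0 := by linarith
  have key : (b_year - β_year) * (A * V - C ^ 2) = -(β * S * C) := by
    linear_combination A * E2 - C * E1
  refine ⟨fun hS => ?_, fun hS => ?_, fun hS => ?_⟩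
  · by_contra h
    push_neg at h
    have h0 : 0 ≤ (b_year - β_year) * (A * V - C ^ 2) := mul_nonneg h hGram.le
    nlinarith [mul_pos (mul_pos hβ hS) hXY]
  · have h0 : (b_year - β_year) * (A * V - C ^ 2) = 0 := by rw [key, hS]; ring
    rcases mul_eq_zero.mp h0 with h | h
    · exact h
    · exact absurd h (by nlinarith)
  · by_contra h
    push_neg at h
    have h0 : (b_year - β_year) * (A * V - C ^ 2) ≤ 0 := mul_nonpos_of_nonpos_of_nonneg h hGram.le
    nlinarith [mul_pos hβ hXY, mul_neg_of_pos_of_neg (mul_pos hβ hXY) hS]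
end
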